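/- Let M be a complete Riemannian manifold, η an L² q-form, β a (p−1)-form with ‖β(x)‖ ≤ c'·ρ(x₀,x) + c'', and χ_r cutoff functions with χ_r = 1 on B_r, χ_r = 0 outside B_{2r}, and ‖dχ_r(x)‖ ≤ K/ρ(x₀,x) on B_{2r} \ B_r. Then dχ_r ∧ β ∧ η → 0 in L² as r → ∞. -/

import Mathlib

open MeasureTheory Metric Filter
open scoped ENNReal NNReal Topology

/-!
STATEMENT 3: On a complete Riemannian manifold `M` (modelled as a metric
measure space, forms being functions into fixed normed spaces, with a pointwise
triple wedge satisfying `‖l ∧ b ∧ e‖ ≤ ‖l‖·‖b‖·‖e‖`), let `η` be an L²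
`q`-form, `β` a `(p−1)`-form with `‖β(x)‖ ≤ c'·ρ(x₀,x) + c''`, and `χ_r`
cutoffs with `χ_r = 1` on `B_r`, `χ_r = 0` outside `B_{2r}`, so that `dχ_r`
vanishes off the annulus `B_{2r} \ B_r` and `‖dχ_r(x)‖ ≤ K/ρ(x₀,x)` there.
Then `dχ_r ∧ β ∧ η → 0` in L² as `r → ∞`.
-/
theorem stmt3 (M : Type*) [MetricSpace M] [MeasureSpace M] [CompleteSpace M]
    (x₀ : M)
    -- value spaces for 1-forms, (p-1)-forms, q-forms and (p+q)-forms
    (L F E G : Type*) [NormedAddCommGroup L] [NormedSpace ℝ L]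
    [NormedAddCommGroup F] [NormedSpace ℝ F]
    [NormedAddCommGroup E] [NormedSpace ℝ E]
    [NormedAddCommGroup G] [NormedSpace ℝ G]
    -- the pointwise triple wedge product
    (wedge3 : L → F → E → G)
    (hwedge3 : ∀ l b e, ‖wedge3 l b e‖ ≤ ‖l‖ * ‖b‖ * ‖e‖)
    -- a (p-1)-form β of linear growth
    (β : M → F) (c' c'' : ℝ) (hβ : ∀ x, ‖β x‖ ≤ c' * dist x₀ x + c'')
    -- an L² q-form η
    (η : M → E) (hη : MemLp η 2 volume)
    -- the differentials dχ_r of the cutoff functions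
    (K : ℝ) (dχ : ℝ → M → L)
    (hdχ0 : ∀ r, ∀ x ∈ ball x₀ r, dχ r x = 0)
    (hdχ0' : ∀ r, ∀ x ∉ ball x₀ (2 * r), dχ r x = 0)
    (hdχ : ∀ r, ∀ x ∈ ball x₀ (2 * r) \ ball x₀ r,
      ‖dχ r x‖ ≤ K / dist x₀ x)
    (hmeas : ∀ r, AEStronglyMeasurable
      (fun x => wedge3 (dχ r x) (β x) (η x)) volume) :
    Tendsto (fun r => eLpNorm (fun x => wedge3 (dχ r x) (β x) (η x)) 2 volume)
      atTop (nhds 0) := by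
  -- the constant
  set c₀ : ℝ := |K| * (|c'| + |c''|) with hc₀
  have hc₀0 : 0 ≤ c₀ := by positivity
  -- pointwise norm bound for r ≥ 1
  have key : ∀ r : ℝ, 1 ≤ r → ∀ x,
      ‖wedge3 (dχ r x) (β x) (η x)‖ ≤ c₀ * ‖η x‖ := by
    intro r hr x
    by_cases hx : x ∈ ball x₀ r
    · rw [hdχ0 r x hx]
      calc ‖wedge3 0 (β x) (η x)‖ ≤ ‖(0 : L)‖ * ‖β x‖ * ‖η x‖ := hwedge3 _ _ _
        _ = 0 := by simp
        _ ≤ c₀ * ‖η x‖ := by positivity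
    · by_cases hx2 : x ∈ ball x₀ (2 * r)
      · have hxann : x ∈ ball x₀ (2 * r) \ ball x₀ r := ⟨hx2, hx⟩
        have hρ : 1 ≤ dist x₀ x := by
          have := mem_ball'.not.mp hx
          push_neg at this
          linarith
        have hρ0 : 0 < dist x₀ x := lt_of_lt_of_le one_pos hρ
        have hβ0 : 0 ≤ c' * dist x₀ x + c'' := le_trans (norm_nonneg _) (hβ x)
        have hdb : ‖dχ r x‖ * ‖β x‖ ≤ c₀ := by
          calc ‖dχ r x‖ * ‖β x‖ ≤ (K / dist x₀ x) * (c' * dist x₀ x + c'') := by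
                apply mul_le_mul (hdχ r x hxann) (hβ x) (norm_nonneg _)
                exact le_trans (norm_nonneg _) (hdχ r x hxann)
            _ ≤ (|K| / dist x₀ x) * (c' * dist x₀ x + c'') := by
                apply mul_le_mul_of_nonneg_right _ hβ0
                exact div_le_div_of_nonneg_right (le_abs_self K) hρ0.le
            _ = |K| * c' + |K| * (c'' / dist x₀ x) := by
                field_simp
            _ ≤ |K| * |c'| + |K| * |c''| := by
                apply add_le_add
                · exact mul_le_mul_of_nonneg_left (le_abs_self c') (abs_nonneg K)
                · apply mul_le_mul_of_nonneg_left _ (abs_nonneg K)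
                  calc c'' / dist x₀ x ≤ |c''| / dist x₀ x :=
                        div_le_div_of_nonneg_right (le_abs_self c'') hρ0.le
                    _ ≤ |c''| / 1 := by
                        apply div_le_div_of_nonneg_left (abs_nonneg _) one_pos hρ
                    _ = |c''| := div_one _
            _ = c₀ := by rw [hc₀]; ring
        calc ‖wedge3 (dχ r x) (β x) (η x)‖ ≤ ‖dχ r x‖ * ‖β x‖ * ‖η x‖ := hwedge3 _ _ _
          _ ≤ c₀ * ‖η x‖ := mul_le_mul_of_nonneg_right hdb (norm_nonneg _)
      · rw [hdχ0' r x hx2]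
        calc ‖wedge3 0 (β x) (η x)‖ ≤ ‖(0 : L)‖ * ‖β x‖ * ‖η x‖ := hwedge3 _ _ _
          _ = 0 := by simp
          _ ≤ c₀ * ‖η x‖ := by positivity
  -- the lintegral of the squared norm tends to zero
  set I : ℝ → ℝ≥0∞ := fun r =>
    ∫⁻ x, (‖wedge3 (dχ r x) (β x) (η x)‖₊ : ℝ≥0∞) ^ (2 : ℝ) ∂volume with hI
  have hbound_fin : ∫⁻ x, (ENNReal.ofReal c₀) ^ (2 : ℝ) *
      (‖η x‖₊ : ℝ≥0∞) ^ (2 : ℝ) ∂volume ≠ ∞ := by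
    rw [lintegral_const_mul' _ _ (by simp [ENNReal.rpow_natCast] : _ ≠ ∞)]
    apply ENNReal.mul_ne_top (by simp [ENNReal.rpow_natCast])
    have := lintegral_rpow_enorm_lt_top_of_eLpNorm_lt_top (f := η) (p := 2)
      (by norm_num) (by norm_num) hη.2
    simpa [enorm_eq_nnnorm] using this.ne
  have hItendsto : Tendsto I atTop (𝓝 0) := by
    rw [tendsto_iff_seq_tendsto]
    intro u hu
    -- eventually u n ≥ 1
    obtain ⟨N, hN⟩ := (hu.eventually (eventually_ge_atTop (1 : ℝ))).exists_forall_of_atTop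
    have : Tendsto (fun n => I (u (n + N))) atTop (𝓝 0) := by
      have h0 : (0 : ℝ≥0∞) = ∫⁻ _, (0 : ℝ≥0∞) ∂(volume : Measure M) := by simp
      rw [h0]
      apply tendsto_lintegral_of_dominated_convergence'
        (fun x => (ENNReal.ofReal c₀) ^ (2 : ℝ) * (‖η x‖₊ : ℝ≥0∞) ^ (2 : ℝ))
      · intro n
        exact (ENNReal.continuous_rpow_const.measurable.comp_aemeasurable
          (hmeas (u (n + N))).enorm)
      · intro n
        apply Eventually.of_forall
        intro x
        have h1 : (1 : ℝ) ≤ u (n + N) := hN _ (Nat.le_add_left _ _)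
        have := key _ h1 x
        calc (‖wedge3 (dχ (u (n + N)) x) (β x) (η x)‖₊ : ℝ≥0∞) ^ (2 : ℝ)
            ≤ (ENNReal.ofReal (c₀ * ‖η x‖)) ^ (2 : ℝ) := by
              apply ENNReal.rpow_le_rpow _ (by norm_num)
              rw [← enorm_eq_nnnorm, ← ofReal_norm]
              exact ENNReal.ofReal_le_ofReal this
          _ = (ENNReal.ofReal c₀ * ENNReal.ofReal ‖η x‖) ^ (2 : ℝ) := by
              rw [ENNReal.ofReal_mul hc₀0]
          _ = (ENNReal.ofReal c₀) ^ (2 : ℝ) * (‖η x‖₊ : ℝ≥0∞) ^ (2 : ℝ) := by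
              rw [ENNReal.mul_rpow_of_nonneg _ _ (by norm_num),
                ofReal_norm, enorm_eq_nnnorm]
      · exact hbound_fin
      · apply Eventually.of_forall
        intro x
        apply Tendsto.congr' _ tendsto_const_nhds
        have hx : ∀ᶠ n in atTop, dist x₀ x < u (n + N) := by
          have : Tendsto (fun n => u (n + N)) atTop atTop :=
            hu.comp (tendsto_add_atTop_nat N)
          exact this.eventually (eventually_gt_atTop _)
        filter_upwards [hx] with n hn
        have hmem : x ∈ ball x₀ (u (n + N)) := by
          rw [mem_ball']
          exact hn
        rw [hdχ0 _ x hmem]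
        have hz : wedge3 (0 : L) (β x) (η x) = 0 := by
          have h := hwedge3 (0 : L) (β x) (η x)
          simp only [norm_zero, zero_mul] at h
          exact norm_le_zero_iff.mp h
        simp [hz]
    show Tendsto (fun n => I (u n)) atTop (𝓝 0)
    exact (tendsto_add_atTop_iff_nat (f := fun n => I (u n)) N).mp this
  -- conclude for the eLpNorm
  have heq : ∀ r, eLpNorm (fun x => wedge3 (dχ r x) (β x) (η x)) 2 volume
      = (I r) ^ (1 / (2 : ℝ)) := by
    intro r
    rw [eLpNorm_eq_lintegral_rpow_enorm_toReal (by norm_num) (by norm_num)]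
    norm_num [hI, enorm_eq_nnnorm]
  simp only [heq]
  have := hItendsto.ennrpow_const (1 / (2 : ℝ))
  simpa using this
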